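/- With U ≥ Ũ as above, define the cumulative difference B̃_t = Σ_{u ∈ [0,t] ∩ I} (U_u − Ũ_u), where I = { t : E(U_t) > E(Ũ_t) } is the countable exceptional set. Then B̃ is a non-negative, increasing, integrable process, and for any t ≤ u < v ≤ T, E(B̃_v − B̃_u | F_t) ≤ E(Ũ_u − Ũ_v | F_t). -/

import Mathlib

open MeasureTheory Filter
open scoped ENNReal NNReal

private lemma telescope_aux (f g : ℝ → ℝ) :
    ∀ (S : Finset ℝ) (a b : ℝ), a < b →
    (∀ s ∈ S, a < s ∧ s ≤ b) →
    (∀ s, g s ≤ f s) →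
    (∀ s s' : ℝ, a ≤ s → s < s' → f s' ≤ g s) →
    ∑ s ∈ S, (f s - g s) ≤ g a - g b := by
  classical
  intro S
  induction S using Finset.strongInduction with
  | _ S ih =>
    intro a b hab hS hgf hfg
    rcases S.eq_empty_or_nonempty with rfl | hne
    · simpa using by linarith [hgf b, hfg a b le_rfl hab]
    · set m := S.min' hne with hm
      have hmS : m ∈ S := S.min'_mem hne
      have ham : a < m := (hS m hmS).1
      have hfma : f m ≤ g a := hfg a m le_rfl ham
      rcases eq_or_lt_of_le (hS m hmS).2 with hmb | hmb
      · have hSm : S = {m} := by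
          apply Finset.eq_singleton_iff_unique_mem.2 ⟨hmS, ?_⟩
          intro x hx
          exact le_antisymm (by rw [hm]; linarith [hmb ▸ (hS x hx).2]) (S.min'_le x hx)
        subst hmb
        rw [hSm, Finset.sum_singleton]
        linarith [hgf m]
      · have hS'sub : S.erase m ⊂ S := Finset.erase_ssubset hmS
        have hIH := ih (S.erase m) hS'sub m b hmb ?_ hgf ?_
        · have : S = insert m (S.erase m) := (Finset.insert_erase hmS).symm
          rw [this, Finset.sum_insert (Finset.notMem_erase _ _)]
          linarith
        · intro s hs
          have hsS := Finset.mem_of_mem_erase hs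
          refine ⟨lt_of_le_of_ne (S.min'_le s hsS) ?_, (hS s hsS).2⟩
          exact fun h => (Finset.ne_of_mem_erase hs) h.symm
        · intro s s' hms hss'
          exact hfg s s' (le_trans ham.le hms) hss'

set_option maxHeartbeats 1000000 in
theorem cumulative_difference_process_properties
    {Ω : Type*} {m0 : MeasurableSpace Ω}
    (μ : Measure Ω) [IsProbabilityMeasure μ]
    (ℱ : Filtration ℝ m0) (U V : ℝ → Ω → ℝ)
    (hU : Supermartingale U ℱ μ) (hV : Supermartingale V ℱ μ)
    (hle : ∀ t : ℝ, V t ≤ᵐ[μ] U t)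
    (hsw : ∀ t u : ℝ, t < u → μ[U u|ℱ t] ≤ᵐ[μ] V t)
    (TT : ℝ)
    (B : ℝ → Ω → ℝ)
    (hB : ∀ t ω, B t ω =
      ∑' u : ({s : ℝ | ∫ ω', V s ω' ∂μ < ∫ ω', U s ω' ∂μ} ∩ Set.Icc 0 t : Set ℝ),
        (U (↑u) ω - V (↑u) ω)) :
    (∀ t : ℝ, 0 ≤ᵐ[μ] B t) ∧
    (∀ t u : ℝ, t ≤ u → B t ≤ᵐ[μ] B u) ∧
    (∀ t : ℝ, Integrable (B t) μ) ∧
    (∀ t u v : ℝ, 0 ≤ t → t ≤ u → u < v → v ≤ TT →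
      μ[fun ω => B v ω - B u ω|ℱ t] ≤ᵐ[μ] μ[fun ω => V u ω - V v ω|ℱ t]) := by
  classical
  set I : Set ℝ := {s : ℝ | ∫ ω', V s ω' ∂μ < ∫ ω', U s ω' ∂μ} with hIdef
  have hUi : ∀ s, Integrable (U s) μ := hU.integrable
  have hVi : ∀ s, Integrable (V s) μ := hV.integrable
  set F : ℝ → Ω → ℝ := fun s ω => U s ω - V s ω with hFdef
  have hFi : ∀ s, Integrable (F s) μ := fun s => (hUi s).sub (hVi s)
  have hFm : ∀ s, Measurable (F s) := fun s =>
    (((hU.1 s).mono (ℱ.le s)).measurable).sub (((hV.1 s).mono (ℱ.le s)).measurable)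
  -- key set-integral inequality
  have key : ∀ (a : ℝ) (A : Set Ω), MeasurableSet[ℱ a] A → ∀ s s' : ℝ, a ≤ s → s < s' →
      ∫ ω in A, U s' ω ∂μ ≤ ∫ ω in A, V s ω ∂μ := by
    intro a A hA s s' has hss
    have hA' : MeasurableSet[ℱ s] A := (ℱ.mono has) _ hA
    rw [← setIntegral_condExp (ℱ.le s) (hUi s') hA']
    exact setIntegral_mono_ae integrable_condExp.integrableOn (hVi s).integrableOn (hsw s s' hss)
  have hVU : ∀ (A : Set Ω) (s : ℝ), ∫ ω in A, V s ω ∂μ ≤ ∫ ω in A, U s ω ∂μ :=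
    fun A s => setIntegral_mono_ae (hVi s).integrableOn (hUi s).integrableOn (hle s)
  have key' : ∀ s s' : ℝ, s < s' → ∫ ω, U s' ω ∂μ ≤ ∫ ω, V s ω ∂μ := by
    intro s s' hss
    have := key s Set.univ MeasurableSet.univ s s' le_rfl hss
    simpa using this
  have hVUfull : ∀ s, ∫ ω, V s ω ∂μ ≤ ∫ ω, U s ω ∂μ :=
    fun s => integral_mono_ae (hVi s) (hUi s) (hle s)
  -- countability of I
  have hIc : I.Countable := by
    have hd : I.PairwiseDisjoint (fun s => Set.Ioo (∫ ω', V s ω' ∂μ) (∫ ω', U s ω' ∂μ)) := by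
      intro s hs s' hs' hne
      rcases lt_or_gt_of_ne hne with h | h
      · refine Set.disjoint_left.2 fun x hx hx' => ?_
        exact absurd (lt_of_lt_of_le hx'.2 (le_trans (key' s s' h) hx.1.le)) (lt_irrefl x).elim
      · refine Set.disjoint_left.2 fun x hx hx' => ?_
        exact absurd (lt_of_lt_of_le hx.2 (le_trans (key' s' s h) hx'.1.le)) (lt_irrefl x).elim
    exact hd.countable_of_isOpen (fun s _ => isOpen_Ioo) (fun s hs => Set.nonempty_Ioo.2 hs)
  have hae : ∀ᵐ ω ∂μ, ∀ s ∈ I, V s ω ≤ U s ω := (ae_ball_iff hIc).2 fun s _ => hle s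
  have hJc : ∀ t : ℝ, (I ∩ Set.Icc 0 t).Countable := fun t => hIc.mono Set.inter_subset_left
  haveI : ∀ t : ℝ, Countable ↥(I ∩ Set.Icc 0 t) := fun t => (hJc t).to_subtype
  -- finite-sum bounds
  have finbound : ∀ (a b : ℝ) (A : Set Ω), a < b → MeasurableSet[ℱ a] A →
      ∀ S : Finset ℝ, (∀ s ∈ S, a < s ∧ s ≤ b) →
      ∑ s ∈ S, ((∫ ω in A, U s ω ∂μ) - ∫ ω in A, V s ω ∂μ)
        ≤ (∫ ω in A, V a ω ∂μ) - ∫ ω in A, V b ω ∂μ :=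
    fun a b A hab hA S hS => telescope_aux _ _ S a b hab hS (fun s => hVU A s)
      (fun s s' has hss => key a A hA s s' has hss)
  have finbound' : ∀ (a b : ℝ), a < b → ∀ S : Finset ℝ, (∀ s ∈ S, a < s ∧ s ≤ b) →
      ∑ s ∈ S, ((∫ ω, U s ω ∂μ) - ∫ ω, V s ω ∂μ) ≤ (∫ ω, V a ω ∂μ) - ∫ ω, V b ω ∂μ :=
    fun a b hab S hS => telescope_aux _ _ S a b hab hS hVUfull (fun s s' _ hss => key' s s' hss)
  -- integrals of F are nonneg
  have hFnonneg : ∀ s, 0 ≤ᵐ[μ] F s := fun s => (hle s).mono fun ω h => sub_nonneg.2 h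
  have hFint_nonneg : ∀ s, 0 ≤ ∫ ω, F s ω ∂μ := fun s => integral_nonneg_of_ae (hFnonneg s)
  -- partial sums of integrals over J t are bounded
  have sumbound : ∀ t : ℝ, ∀ S : Finset ↥(I ∩ Set.Icc 0 t),
      ∑ s ∈ S, ∫ ω, F (↑s) ω ∂μ
        ≤ (∫ ω, V (-1) ω ∂μ) - ∫ ω, V (max t 0 + 1) ω ∂μ := by
    intro t S
    have heq : ∀ s : ↥(I ∩ Set.Icc 0 t), ∫ ω, F (↑s) ω ∂μ
        = (∫ ω, U (↑s) ω ∂μ) - ∫ ω, V (↑s) ω ∂μ :=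
      fun s => integral_sub (hUi _) (hVi _)
    calc ∑ s ∈ S, ∫ ω, F (↑s) ω ∂μ
        = ∑ r ∈ S.image (fun x : ↥(I ∩ Set.Icc 0 t) => (x : ℝ)),
            ((∫ ω, U r ω ∂μ) - ∫ ω, V r ω ∂μ) := by
          rw [Finset.sum_image (fun x _ y _ h => Subtype.coe_injective h)]
          exact Finset.sum_congr rfl fun s _ => heq s
      _ ≤ _ := by
          refine finbound' (-1) (max t 0 + 1) (by linarith [le_max_right t 0]) _ ?_
          intro r hr
          obtain ⟨x, _, rfl⟩ := Finset.mem_image.1 hr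
          refine ⟨by linarith [x.2.2.1], ?_⟩
          have := x.2.2.2
          have := le_max_left t 0
          linarith
  have hsumInt : ∀ t : ℝ, Summable (fun s : ↥(I ∩ Set.Icc 0 t) => ∫ ω, F (↑s) ω ∂μ) :=
    fun t => summable_of_sum_le (fun s => hFint_nonneg _) (sumbound t)
  -- norm version
  have hnormint : ∀ t : ℝ, (fun s : ↥(I ∩ Set.Icc 0 t) => ∫ ω, ‖F (↑s) ω‖ ∂μ)
      = fun s : ↥(I ∩ Set.Icc 0 t) => ∫ ω, F (↑s) ω ∂μ := by
    intro t
    funext s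
    exact integral_congr_ae ((hFnonneg ↑s).mono fun ω h => Real.norm_of_nonneg h)
  -- lintegral summability
  have hlin : ∀ t : ℝ, ∑' s : ↥(I ∩ Set.Icc 0 t), ∫⁻ ω, ‖F (↑s) ω‖₊ ∂μ ≠ ∞ := by
    intro t
    have h1 : ∀ s : ↥(I ∩ Set.Icc 0 t), ∫⁻ ω, ‖F (↑s) ω‖₊ ∂μ
        = ENNReal.ofReal (∫ ω, ‖F (↑s) ω‖ ∂μ) :=
      fun s => (ofReal_integral_norm_eq_lintegral_enorm (hFi ↑s)).symm
    rw [tsum_congr h1]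
    have hsn : Summable (fun s : ↥(I ∩ Set.Icc 0 t) => ∫ ω, ‖F (↑s) ω‖ ∂μ) := by
      rw [hnormint t]; exact hsumInt t
    rw [← ENNReal.ofReal_tsum_of_nonneg (fun s => integral_nonneg fun ω => norm_nonneg _) hsn]
    exact ENNReal.ofReal_ne_top
  have hmeasnn : ∀ t : ℝ, ∀ s : ↥(I ∩ Set.Icc 0 t),
      AEMeasurable (fun ω => (‖F (↑s) ω‖₊ : ℝ≥0∞)) μ :=
    fun t s => (hFi ↑s).aestronglyMeasurable.enorm
  -- a.e. summability
  have hsae : ∀ t : ℝ, ∀ᵐ ω ∂μ, Summable (fun s : ↥(I ∩ Set.Icc 0 t) => F (↑s) ω) := by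
    intro t
    have h2 : ∫⁻ ω, ∑' s : ↥(I ∩ Set.Icc 0 t), (‖F (↑s) ω‖₊ : ℝ≥0∞) ∂μ ≠ ∞ := by
      rw [lintegral_tsum (hmeasnn t)]; exact hlin t
    filter_upwards [ae_lt_top' (AEMeasurable.ennreal_tsum (hmeasnn t)) h2] with ω hω
    have hsummc := ENNReal.tsum_coe_ne_top_iff_summable_coe.1 hω.ne
    refine Summable.of_norm ?_
    simpa [coe_nnnorm] using hsummc
  -- integrability of B
  have hBint : ∀ t : ℝ, Integrable (B t) μ := by
    intro t
    have hGm : Measurable (fun ω => ((∑' s : ↥(I ∩ Set.Icc 0 t), ‖F (↑s) ω‖₊ : ℝ≥0) : ℝ)) :=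
      measurable_coe_nnreal_real.comp (Measurable.nnreal_tsum fun s => (hFm ↑s).nnnorm)
    have hrep : B t =ᵐ[μ]
        (fun ω => ((∑' s : ↥(I ∩ Set.Icc 0 t), ‖F (↑s) ω‖₊ : ℝ≥0) : ℝ)) := by
      filter_upwards [hae] with ω hω
      rw [hB t ω]
      show _ = ((∑' s : ↥(I ∩ Set.Icc 0 t), ‖F (↑s) ω‖₊ : ℝ≥0) : ℝ)
      rw [NNReal.coe_tsum]
      refine tsum_congr fun s => ?_
      rw [coe_nnnorm, Real.norm_of_nonneg (sub_nonneg.2 (hω ↑s s.2.1))]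
    refine Integrable.congr ⟨hGm.aestronglyMeasurable, ?_⟩ hrep.symm
    show ∫⁻ ω, (‖((∑' s : ↥(I ∩ Set.Icc 0 t), ‖F (↑s) ω‖₊ : ℝ≥0) : ℝ)‖₊ : ℝ≥0∞) ∂μ < ∞
    calc ∫⁻ ω, (‖((∑' s : ↥(I ∩ Set.Icc 0 t), ‖F (↑s) ω‖₊ : ℝ≥0) : ℝ)‖₊ : ℝ≥0∞) ∂μ
        ≤ ∫⁻ ω, ∑' s : ↥(I ∩ Set.Icc 0 t), (‖F (↑s) ω‖₊ : ℝ≥0∞) ∂μ := by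
          refine lintegral_mono fun ω => ?_
          simp only [NNReal.nnnorm_eq]
          by_cases hs : Summable (fun s : ↥(I ∩ Set.Icc 0 t) => ‖F (↑s) ω‖₊)
          · rw [ENNReal.coe_tsum hs]
          · rw [tsum_eq_zero_of_not_summable hs]; simp
      _ = ∑' s : ↥(I ∩ Set.Icc 0 t), ∫⁻ ω, (‖F (↑s) ω‖₊ : ℝ≥0∞) ∂μ := lintegral_tsum (hmeasnn t)
      _ < ∞ := (hlin t).lt_top
  refine ⟨?_, ?_, hBint, ?_⟩
  · -- nonneg
    intro t
    filter_upwards [hae] with ω hω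
    rw [Pi.zero_apply, hB t ω]
    exact tsum_nonneg fun s => sub_nonneg.2 (hω ↑s s.2.1)
  · -- monotone
    intro t u htu
    filter_upwards [hae, hsae u] with ω hω hsum
    rw [hB t ω, hB u ω]
    have hsub : (I ∩ Set.Icc 0 t) ⊆ (I ∩ Set.Icc 0 u) :=
      Set.inter_subset_inter_right _ (Set.Icc_subset_Icc_right htu)
    have h1 : Summable (fun s : ↥(I ∩ Set.Icc 0 u) => U (↑s) ω - V (↑s) ω) := hsum
    have h2' : Summable ((fun s : ↥(I ∩ Set.Icc 0 u) => U (↑s) ω - V (↑s) ω) ∘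
        (Set.inclusion hsub)) :=
      h1.comp_injective (Set.inclusion_injective hsub)
    have h2 : Summable (fun s : ↥(I ∩ Set.Icc 0 t) => U (↑s) ω - V (↑s) ω) := h2'
    have h3 : ∀ c : ↥(I ∩ Set.Icc 0 u), c ∉ Set.range (Set.inclusion hsub) →
        0 ≤ U (↑c) ω - V (↑c) ω := fun c _ => sub_nonneg.2 (hω ↑c c.2.1)
    exact h2.tsum_le_tsum_of_inj (Set.inclusion hsub) (Set.inclusion_injective hsub)
      h3 (fun s => le_rfl) h1
  · -- conditional expectation inequality
    intro t u v ht htu huv hvT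
    set K : Set ℝ := I ∩ Set.Ioc u v with hK
    have hKc : K.Countable := hIc.mono Set.inter_subset_left
    haveI : Countable ↥K := hKc.to_subtype
    have hKsub : K ⊆ I ∩ Set.Icc 0 v :=
      Set.inter_subset_inter_right _ (fun x hx => ⟨le_trans (ht.trans htu) hx.1.le, hx.2⟩)
    have hJusub : (I ∩ Set.Icc 0 u) ⊆ I ∩ Set.Icc 0 v :=
      Set.inter_subset_inter_right _ (Set.Icc_subset_Icc_right huv.le)
    have hBint_uv : Integrable (fun ω => B v ω - B u ω) μ := (hBint v).sub (hBint u)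
    have hVuv_int : Integrable (fun ω => V u ω - V v ω) μ := (hVi u).sub (hVi v)
    have hsplit : ∀ᵐ ω ∂μ, B v ω - B u ω = ∑' s : ↥K, F (↑s) ω := by
      filter_upwards [hsae v] with ω hsum
      have hsum' : Summable (fun s : ↥(I ∩ Set.Icc 0 v) => U (↑s) ω - V (↑s) ω) := hsum
      have s1' : Summable ((fun s : ↥(I ∩ Set.Icc 0 v) => U (↑s) ω - V (↑s) ω) ∘
          (Set.inclusion hJusub)) :=
        hsum'.comp_injective (Set.inclusion_injective hJusub)
      have s2' : Summable ((fun s : ↥(I ∩ Set.Icc 0 v) => U (↑s) ω - V (↑s) ω) ∘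
          (Set.inclusion hKsub)) :=
        hsum'.comp_injective (Set.inclusion_injective hKsub)
      have s1 : Summable ((fun r : ℝ => U r ω - V r ω) ∘ ((↑) : ↥(I ∩ Set.Icc 0 u) → ℝ)) := s1'
      have s2 : Summable ((fun r : ℝ => U r ω - V r ω) ∘ ((↑) : ↥K → ℝ)) := s2'
      have hdisj : Disjoint (I ∩ Set.Icc 0 u) K :=
        Set.disjoint_left.2 fun x hx hx' => absurd hx'.2.1 (not_lt.2 hx.2.2)
      have hunion : I ∩ Set.Icc 0 v = (I ∩ Set.Icc 0 u) ∪ K := by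
        rw [hK, ← Set.inter_union_distrib_left,
          Set.Icc_union_Ioc_eq_Icc (ht.trans htu) huv.le]
      rw [hB u ω, hB v ω, hunion,
        s1.tsum_union_disjoint (f := fun r : ℝ => U r ω - V r ω) hdisj s2,
        add_sub_cancel_left]
    have hsetineq : ∀ A : Set Ω, MeasurableSet[ℱ t] A →
        ∫ ω in A, (B v ω - B u ω) ∂μ ≤ ∫ ω in A, (V u ω - V v ω) ∂μ := by
      intro A hA
      have hAu : MeasurableSet[ℱ u] A := (ℱ.mono htu) _ hA
      have hfin : ∀ S : Finset ↥K, ∑ s ∈ S, ∫ ω in A, F (↑s) ω ∂μ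
          ≤ (∫ ω in A, V u ω ∂μ) - ∫ ω in A, V v ω ∂μ := by
        intro S
        have heq : ∀ s : ↥K, ∫ ω in A, F (↑s) ω ∂μ
            = (∫ ω in A, U (↑s) ω ∂μ) - ∫ ω in A, V (↑s) ω ∂μ :=
          fun s => integral_sub (hUi _).integrableOn (hVi _).integrableOn
        calc ∑ s ∈ S, ∫ ω in A, F (↑s) ω ∂μ
            = ∑ r ∈ S.image (fun x : ↥K => (x : ℝ)),
                ((∫ ω in A, U r ω ∂μ) - ∫ ω in A, V r ω ∂μ) := by
              rw [Finset.sum_image (fun x _ y _ h => Subtype.coe_injective h)]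
              exact Finset.sum_congr rfl fun s _ => heq s
          _ ≤ _ := by
              refine finbound u v A huv hAu _ ?_
              intro r hr
              obtain ⟨x, _, rfl⟩ := Finset.mem_image.1 hr
              exact ⟨x.2.2.1, x.2.2.2⟩
      have hnn : ∀ s : ↥K, 0 ≤ ∫ ω in A, F (↑s) ω ∂μ :=
        fun s => integral_nonneg_of_ae (ae_restrict_of_ae (hFnonneg ↑s))
      have hsum2 : Summable (fun s : ↥K => ∫ ω in A, F (↑s) ω ∂μ) :=
        summable_of_sum_le (fun s => hnn s) hfin
      have hnormA : (fun s : ↥K => ∫ ω in A, ‖F (↑s) ω‖ ∂μ)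
          = fun s : ↥K => ∫ ω in A, F (↑s) ω ∂μ := by
        funext s
        exact integral_congr_ae ((ae_restrict_of_ae (hFnonneg ↑s)).mono
          fun ω h => Real.norm_of_nonneg h)
      have hInt_tsum : ∫ ω in A, (∑' s : ↥K, F (↑s) ω) ∂μ
          = ∑' s : ↥K, ∫ ω in A, F (↑s) ω ∂μ := by
        refine (integral_tsum_of_summable_integral_norm (μ := μ.restrict A)
          (F := fun s : ↥K => F (↑s)) (fun s => (hFi (↑s)).integrableOn) ?_).symm
        rw [hnormA]; exact hsum2
      calc ∫ ω in A, (B v ω - B u ω) ∂μ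
          = ∫ ω in A, (∑' s : ↥K, F (↑s) ω) ∂μ :=
            integral_congr_ae (ae_restrict_of_ae hsplit)
        _ = ∑' s : ↥K, ∫ ω in A, F (↑s) ω ∂μ := hInt_tsum
        _ ≤ (∫ ω in A, V u ω ∂μ) - ∫ ω in A, V v ω ∂μ := Summable.tsum_le_of_sum_le hsum2 hfin
        _ = ∫ ω in A, (V u ω - V v ω) ∂μ :=
            (integral_sub (hVi u).integrableOn (hVi v).integrableOn).symm
    have hfm : StronglyMeasurable[ℱ t] (μ[fun ω => B v ω - B u ω|ℱ t]) :=
      stronglyMeasurable_condExp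
    have hgm : StronglyMeasurable[ℱ t] (μ[fun ω => V u ω - V v ω|ℱ t]) :=
      stronglyMeasurable_condExp
    refine ae_le_of_ae_le_trim (hm := ℱ.le t) ?_
    refine ae_le_of_forall_setIntegral_le
      (integrable_condExp.trim (ℱ.le t) hfm) (integrable_condExp.trim (ℱ.le t) hgm) ?_
    intro s hs _
    rw [restrict_trim (ℱ.le t) μ hs, ← integral_trim (ℱ.le t) hfm,
      ← integral_trim (ℱ.le t) hgm]
    rw [setIntegral_condExp (ℱ.le t) hBint_uv hs, setIntegral_condExp (ℱ.le t) hVuv_int hs]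
    exact hsetineq s hs
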